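/- arXiv:1503.03281 — 4 statements merged into one kernel-verified Lean document; each statement's English description precedes it below -/
import Mathlib

section
/- Let L/k be a finite Galois field extension with Galois group G = Gal(L/k) and let n ≥ 1. Suppose ξ : G → GL_n(L) satisfies the cocycle condition ξ(σ·τ) = ξ(σ) · σ(ξ(τ)) for all σ, τ ∈ G, where σ(M) denotes entrywise application of σ to the matrix M. Then there exists η ∈ GL_n(L) such that ξ(σ) = η · σ(η)⁻¹ for all σ ∈ G. -/
open Matrix

/-- noncommutative Hilbert 90: every cocycle
`ξ : Gal(L/k) → GL_n(L)` with `ξ(στ) = ξ(σ)·σ(ξ(τ))` is a coboundary: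
there is `η ∈ GL_n(L)` with `ξ(σ) = η · σ(η)⁻¹`. -/
theorem hilbert90_GLn
    (k L : Type*) [Field k] [Field L] [Algebra k L]
    [FiniteDimensional k L] [IsGalois k L]
    (n : ℕ) (hn : 1 ≤ n)
    (ξ : (L ≃ₐ[k] L) → GL (Fin n) L)
    (hξ : ∀ σ τ : L ≃ₐ[k] L,
      (ξ (σ * τ) : Matrix (Fin n) (Fin n) L) =
        (ξ σ : Matrix (Fin n) (Fin n) L) * ((ξ τ : Matrix (Fin n) (Fin n) L)).map σ) :
    ∃ η : GL (Fin n) L, ∀ σ : L ≃ₐ[k] L,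
      (ξ σ : Matrix (Fin n) (Fin n) L) =
        (η : Matrix (Fin n) (Fin n) L) * ((η : Matrix (Fin n) (Fin n) L).map σ)⁻¹ := by
  classical
  -- `ξ 1 = 1`
  have hone : (ξ 1 : Matrix (Fin n) (Fin n) L) = 1 := by
    have h := hξ 1 1
    rw [one_mul] at h
    have hmap : ((ξ 1 : Matrix (Fin n) (Fin n) L)).map ⇑(1 : L ≃ₐ[k] L)
        = (ξ 1 : Matrix (Fin n) (Fin n) L) := by
      ext i j; simp [Matrix.map_apply]
    rw [hmap] at h
    have h2 : (ξ (1 * 1) : GL (Fin n) L) = ξ 1 * ξ 1 := Units.ext (by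
      rw [Units.val_mul]; exact h)
    rw [one_mul] at h2
    have h3 : (ξ 1 : GL (Fin n) L) = 1 :=
      (mul_left_cancel (a := ξ 1) ((mul_one _).trans h2)).symm
    rw [h3]; rfl
  -- the twisted semilinear action
  set act : (L ≃ₐ[k] L) → (Fin n → L) → (Fin n → L) :=
    fun σ v => (ξ σ : Matrix (Fin n) (Fin n) L) *ᵥ (fun i => σ (v i)) with hact
  have act_one : ∀ v, act 1 v = v := by
    intro v
    simp [hact, hone, Matrix.one_mulVec]
  have hmapvec : ∀ (τ : L ≃ₐ[k] L) (A : Matrix (Fin n) (Fin n) L) (w : Fin n → L),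
      (fun i => τ ((A *ᵥ w) i)) = A.map ⇑τ *ᵥ (fun i => τ (w i)) := by
    intro τ A w
    funext i
    simp [Matrix.mulVec, dotProduct, _root_.map_sum, _root_.map_mul, Matrix.map_apply]
  have act_act : ∀ (τ σ : L ≃ₐ[k] L) (v : Fin n → L),
      act τ (act σ v) = act (τ * σ) v := by
    intro τ σ v
    show (ξ τ : Matrix (Fin n) (Fin n) L) *ᵥ
        (fun i => τ (((ξ σ : Matrix (Fin n) (Fin n) L) *ᵥ fun i => σ (v i)) i)) = _
    rw [hmapvec τ _ _, Matrix.mulVec_mulVec, ← hξ τ σ]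
    rfl
  -- fixed points
  set S : Set (Fin n → L) := {v | ∀ τ, act τ v = v} with hS
  -- averaged vectors are fixed points
  have hw : ∀ (c : L) (v : Fin n → L), (∑ σ : L ≃ₐ[k] L, σ c • act σ v) ∈ S := by
    intro c v τ
    have step1 : (fun i => τ ((∑ σ : L ≃ₐ[k] L, σ c • act σ v) i))
        = ∑ σ : L ≃ₐ[k] L, τ (σ c) • (fun i => τ (act σ v i)) := by
      funext i
      simp only [Finset.sum_apply, Pi.smul_apply, smul_eq_mul, _root_.map_sum, _root_.map_mul]
    show (ξ τ : Matrix (Fin n) (Fin n) L) *ᵥ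
        (fun i => τ ((∑ σ : L ≃ₐ[k] L, σ c • act σ v) i)) = _
    rw [step1]
    have step2 : (ξ τ : Matrix (Fin n) (Fin n) L) *ᵥ
        (∑ σ : L ≃ₐ[k] L, τ (σ c) • (fun i => τ (act σ v i)))
        = ∑ σ : L ≃ₐ[k] L, τ (σ c) • act τ (act σ v) := by
      rw [← Matrix.mulVecLin_apply, map_sum]
      refine Finset.sum_congr rfl fun σ _ => ?_
      rw [LinearMap.map_smul, Matrix.mulVecLin_apply]
    rw [step2]
    have step3 : ∀ σ : L ≃ₐ[k] L, τ (σ c) • act τ (act σ v)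
        = (τ * σ) c • act (τ * σ) v := by
      intro σ; rw [act_act]; rfl
    simp only [step3]
    exact Fintype.sum_equiv (Equiv.mulLeft τ)
      (fun σ => (τ * σ) c • act (τ * σ) v) (fun σ => σ c • act σ v) (fun σ => rfl)
  -- fixed points span everything
  have hspan : Submodule.span L S = ⊤ := by
    by_contra hne
    obtain ⟨f, hf0, hker⟩ :=
      (Submodule.span L S).exists_dual_map_eq_bot_of_lt_top
        (lt_top_iff_ne_top.2 hne) inferInstance
    have hfS : ∀ v ∈ S, f v = 0 := by
      intro v hv
      have hm : f v ∈ (Submodule.span L S).map f :=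
        Submodule.mem_map_of_mem (Submodule.subset_span hv)
      rw [hker] at hm
      exact (Submodule.mem_bot L).1 hm
    -- Dedekind independence of characters
    have inj : Function.Injective
        (fun σ : L ≃ₐ[k] L => MonoidHom.mk (OneHom.mk ⇑σ (map_one σ)) (map_mul σ)) := by
      intro σ σ' h
      ext x
      exact DFunLike.congr_fun h x
    have li : LinearIndependent L
        (fun σ : L ≃ₐ[k] L => ((MonoidHom.mk (OneHom.mk ⇑σ (map_one σ)) (map_mul σ) :
          L →* L) : L → L)) :=
      (linearIndependent_monoidHom L L).comp _ inj
    have key : ∀ (v : Fin n → L) (σ : L ≃ₐ[k] L), f (act σ v) = 0 := by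
      intro v
      have h1 : ∀ c : L, ∑ σ : L ≃ₐ[k] L, σ c * f (act σ v) = 0 := by
        intro c
        have h2 := hfS _ (hw c v)
        rw [map_sum] at h2
        simpa [LinearMap.map_smul, smul_eq_mul] using h2
      have h3 : ∑ σ : L ≃ₐ[k] L, f (act σ v) •
          ((MonoidHom.mk (OneHom.mk ⇑σ (map_one σ)) (map_mul σ) : L →* L) : L → L)
          = 0 := by
        funext c
        simp only [Finset.sum_apply, Pi.smul_apply, smul_eq_mul, Pi.zero_apply]
        calc ∑ σ : L ≃ₐ[k] L, f (act σ v) * σ c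
            = ∑ σ : L ≃ₐ[k] L, σ c * f (act σ v) := by
              refine Finset.sum_congr rfl fun σ _ => mul_comm _ _
          _ = 0 := h1 c
      exact Fintype.linearIndependent_iff.1 li _ h3
    exact hf0 (LinearMap.ext fun v => by
      have := key v 1
      rwa [act_one] at this)
  -- extract a basis of fixed points
  obtain ⟨b, hbS, hbspan, hbli⟩ := exists_linearIndependent L S
  rw [hspan] at hbspan
  let B : Module.Basis b L (Fin n → L) := Module.Basis.mk hbli (by rw [Subtype.range_coe, hbspan])
  let e : b ≃ Fin n := B.indexEquiv (Pi.basisFun L (Fin n))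
  let B' : Module.Basis (Fin n) L (Fin n → L) := B.reindex e
  have hB'S : ∀ i, B' i ∈ S := by
    intro i
    have : B' i = (e.symm i : Fin n → L) := by
      rw [Module.Basis.reindex_apply, Module.Basis.mk_apply]
    rw [this]
    exact hbS (e.symm i).2
  -- the matrix whose columns are the fixed basis vectors
  set η : Matrix (Fin n) (Fin n) L := (Pi.basisFun L (Fin n)).toMatrix B' with hη
  have hηinv : Invertible η := (Pi.basisFun L (Fin n)).invertibleToMatrix B'
  have hηu : IsUnit η := isUnit_of_invertible η
  have hη_apply : ∀ i j, η i j = B' j i := by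
    intro i j
    rw [hη, Module.Basis.toMatrix_apply, Pi.basisFun_repr]
  have hfix : ∀ σ : L ≃ₐ[k] L, (ξ σ : Matrix (Fin n) (Fin n) L) * η.map ⇑σ = η := by
    intro σ
    ext i j
    have hv : act σ (B' j) = B' j := hB'S j σ
    have hvi := congrFun hv i
    calc ((ξ σ : Matrix (Fin n) (Fin n) L) * η.map ⇑σ) i j
        = ∑ m, (ξ σ : Matrix (Fin n) (Fin n) L) i m * σ (B' j m) := by
          simp [Matrix.mul_apply, Matrix.map_apply, hη_apply]
      _ = act σ (B' j) i := by
          simp [hact, Matrix.mulVec, dotProduct]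
      _ = B' j i := hvi
      _ = η i j := (hη_apply i j).symm
  refine ⟨hηu.unit, fun σ => ?_⟩
  have hdet0 : η.det ≠ 0 := by
    have := (Matrix.isUnit_iff_isUnit_det η).1 hηu
    exact this.ne_zero
  have hdet : IsUnit (η.map ⇑σ).det := by
    have hdd : (η.map ⇑σ).det = σ η.det := by
      have h := RingHom.map_det (σ : L →+* L) η
      rw [RingHom.mapMatrix_apply] at h
      simpa using h.symm
    rw [hdd]
    exact isUnit_iff_ne_zero.2 (fun h => hdet0 (σ.injective (by rw [h, map_zero])))
  have hcancel := Matrix.mul_nonsing_inv_cancel_right (η.map ⇑σ)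
    (ξ σ : Matrix (Fin n) (Fin n) L) hdet
  rw [hfix σ] at hcancel
  rw [IsUnit.unit_spec]
  exact hcancel.symm
end

section
/- Let L/k be a finite Galois field extension with Galois group G = Gal(L/k) and let n ≥ 1. Suppose ξ : G → GL_n(L) is a map satisfying ξ(σ·τ) = σ(ξ(τ)) · ξ(σ) for all σ, τ ∈ G, where σ acts entrywise on matrices. Consider the twisted action of G on Lⁿ given by ρ_ξ(σ)(v) = ξ(σ)⁻¹ · σ(v) (with σ acting coordinatewise on v). Then the set V = { v ∈ Lⁿ : ρ_ξ(σ)(v) = v for all σ ∈ G } is a k-subspace of Lⁿ whose dimension over k equals n. -/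
open Matrix

section Aux
variable {k L : Type*} [Field k] [Field L] [Algebra k L] {n : ℕ}

lemma aux_map_mulVec (σ : L ≃ₐ[k] L) (A : Matrix (Fin n) (Fin n) L) (v : Fin n → L) :
    (fun i => σ ((A *ᵥ v) i)) = A.map σ *ᵥ (fun i => σ (v i)) := by
  funext i
  simp [Matrix.mulVec, dotProduct, map_sum, Matrix.map_apply]

lemma aux_map_mul (σ : L ≃ₐ[k] L) (A B : Matrix (Fin n) (Fin n) L) :
    (A * B).map σ = A.map σ * B.map σ := by
  ext i j
  simp [Matrix.map_apply, Matrix.mul_apply, map_sum]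

lemma aux_fixed (x : L) [FiniteDimensional k L] [IsGalois k L]
    (hx : ∀ σ : L ≃ₐ[k] L, σ x = x) : ∃ r : k, algebraMap k L r = x := by
  have h1 : IntermediateField.fixedField (⊤ : Subgroup (L ≃ₐ[k] L)) = ⊥ := by
    rw [← IntermediateField.fixingSubgroup_bot (F := k) (E := L)]
    exact IsGalois.fixedField_fixingSubgroup ⊥
  have hm : x ∈ IntermediateField.fixedField (⊤ : Subgroup (L ≃ₐ[k] L)) := fun σ => hx σ
  rw [h1, IntermediateField.mem_bot] at hm
  exact hm
end Aux

/-- The fixed space of the twisted Galois action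
`ρ_ξ(σ)(v) = ξ(σ)⁻¹ · σ(v)` on `Lⁿ` is a `k`-subspace of dimension `n` over `k`. -/
theorem twisted_fixed_space_has_dimension_n
    (k L : Type*) [Field k] [Field L] [Algebra k L]
    [FiniteDimensional k L] [IsGalois k L]
    (n : ℕ) (hn : 1 ≤ n)
    (ξ : (L ≃ₐ[k] L) → GL (Fin n) L)
    (hξ : ∀ σ τ : L ≃ₐ[k] L,
      (ξ (σ * τ) : Matrix (Fin n) (Fin n) L) =
        ((ξ τ : Matrix (Fin n) (Fin n) L)).map σ * (ξ σ : Matrix (Fin n) (Fin n) L)) :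
    ∃ V : Submodule k (Fin n → L),
      (V : Set (Fin n → L)) =
        {v : Fin n → L | ∀ σ : L ≃ₐ[k] L,
          ((ξ σ)⁻¹ : GL (Fin n) L) *ᵥ (fun i => σ (v i)) = v} ∧
      Module.finrank k V = n := by
  classical
  set M : (L ≃ₐ[k] L) → Matrix (Fin n) (Fin n) L := fun σ => (ξ σ : Matrix (Fin n) (Fin n) L)
    with hM
  set N : (L ≃ₐ[k] L) → Matrix (Fin n) (Fin n) L :=
    fun σ => (((ξ σ)⁻¹ : GL (Fin n) L) : Matrix (Fin n) (Fin n) L) with hN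
  have hMN : ∀ σ, M σ * N σ = 1 := fun σ => by
    rw [hM, hN]; rw [← Units.val_mul, mul_inv_cancel, Units.val_one]
  have hNM : ∀ σ, N σ * M σ = 1 := fun σ => by
    rw [hM, hN]; rw [← Units.val_mul, inv_mul_cancel, Units.val_one]
  have hmapNM : ∀ (σ τ : L ≃ₐ[k] L), (N τ).map σ * (M τ).map σ = 1 := by
    intro σ τ
    rw [← aux_map_mul, hNM τ]
    ext i j
    simp [Matrix.map_apply, Matrix.one_apply, apply_ite σ]
  have hNcomp : ∀ σ τ : L ≃ₐ[k] L, N (σ * τ) = N σ * (N τ).map σ := by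
    intro σ τ
    have h1 : (N σ * (N τ).map σ) * M (σ * τ) = 1 := by
      have h2 : (M (σ * τ)) = (M τ).map σ * M σ := hξ σ τ
      rw [h2, mul_assoc, ← mul_assoc ((N τ).map ⇑σ), hmapNM σ τ, one_mul, hNM σ]
    exact (left_inv_eq_right_inv h1 (hMN (σ * τ))).symm
  -- the twisted action
  set f : (L ≃ₐ[k] L) → (Fin n → L) → (Fin n → L) :=
    fun σ v => N σ *ᵥ (fun i => σ (v i)) with hfdef
  have hfadd : ∀ σ u v, f σ (u + v) = f σ u + f σ v := by
    intro σ u v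
    have h : (fun i => σ ((u + v) i)) = (fun i => σ (u i)) + fun i => σ (v i) := by
      funext i; simp
    simp only [hfdef, h, Matrix.mulVec_add]
  have hfsmulL : ∀ σ (a : L) v, f σ (a • v) = σ a • f σ v := by
    intro σ a v
    have h : (fun i => σ ((a • v) i)) = σ a • fun i => σ (v i) := by
      funext i; simp [smul_eq_mul]
    simp only [hfdef, h, Matrix.mulVec_smul]
  have hfsmulk : ∀ σ (r : k) v, f σ (r • v) = r • f σ v := by
    intro σ r v
    have h : (fun i => σ ((r • v) i)) = r • fun i => σ (v i) := by
      funext i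
      simp only [Pi.smul_apply, Algebra.smul_def, _root_.map_mul, AlgEquiv.commutes]
    simp only [hfdef, h, Matrix.mulVec_smul]
  have hcomp : ∀ σ τ v, f σ (f τ v) = f (σ * τ) v := by
    intro σ τ v
    simp only [hfdef]
    rw [aux_map_mulVec σ (N τ), Matrix.mulVec_mulVec, ← hNcomp]
    congr 1
  -- additive maps, for map_sum
  let F : (L ≃ₐ[k] L) → (Fin n → L) →+ (Fin n → L) := fun σ => AddMonoidHom.mk' (f σ) (hfadd σ)
  have hFf : ∀ σ v, F σ v = f σ v := fun _ _ => rfl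
  -- the fixed submodule
  refine ⟨{ carrier := {v | ∀ σ, f σ v = v}
            add_mem' := fun {u v} hu hv σ => by rw [hfadd σ u v, hu σ, hv σ]
            zero_mem' := fun σ => by
              have h : (fun i => σ ((0 : Fin n → L) i)) = 0 := by funext i; simp
              simp only [hfdef, h, Matrix.mulVec_zero]
            smul_mem' := fun r v hv σ => by rw [hfsmulk σ r v, hv σ] }, rfl, ?_⟩
  set V : Submodule k (Fin n → L) :=
    { carrier := {v | ∀ σ, f σ v = v}
      add_mem' := fun {u v} hu hv σ => by rw [hfadd σ u v, hu σ, hv σ]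
      zero_mem' := fun σ => by
        have h : (fun i => σ ((0 : Fin n → L) i)) = 0 := by funext i; simp
        simp only [hfdef, h, Matrix.mulVec_zero]
      smul_mem' := fun r v hv σ => by rw [hfsmulk σ r v, hv σ] } with hV
  have hmemV : ∀ v, v ∈ V ↔ ∀ σ, f σ v = v := fun v => Iff.rfl
  -- spanning over L
  have hspan : Submodule.span L ((V : Set (Fin n → L))) = ⊤ := by
    by_contra hne
    obtain ⟨lam, hlam0, hlam⟩ :=
      Submodule.exists_dual_map_eq_bot_of_lt_top
        (p := Submodule.span L ((V : Set (Fin n → L)))) (lt_top_iff_ne_top.2 hne) inferInstance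
    have hker : ∀ x ∈ Submodule.span L ((V : Set (Fin n → L))), lam x = 0 := by
      intro x hx
      have : lam x ∈ Submodule.map lam (Submodule.span L ((V : Set (Fin n → L)))) :=
        Submodule.mem_map_of_mem hx
      rw [hlam] at this
      exact (Submodule.mem_bot L).1 this
    have hP : ∀ (c : L) (v : Fin n → L), (∑ σ : L ≃ₐ[k] L, f σ (c • v)) ∈ V := by
      intro c v
      rw [hmemV]
      intro τ
      have hsum : f τ (∑ σ : L ≃ₐ[k] L, f σ (c • v)) = ∑ σ : L ≃ₐ[k] L, f τ (f σ (c • v)) :=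
        map_sum (F τ) _ _
      rw [hsum, Finset.sum_congr rfl (fun σ _ => hcomp τ σ (c • v))]
      exact Fintype.sum_equiv (Equiv.mulLeft τ) _ _ (fun σ => rfl)
    have hvanish : ∀ (v : Fin n → L) (c : L), ∑ σ : L ≃ₐ[k] L, lam (f σ v) * σ c = 0 := by
      intro v c
      have h0 : lam (∑ σ : L ≃ₐ[k] L, f σ (c • v)) = 0 :=
        hker _ (Submodule.subset_span (hP c v))
      rw [map_sum] at h0
      calc ∑ σ : L ≃ₐ[k] L, lam (f σ v) * σ c
          = ∑ σ : L ≃ₐ[k] L, lam (f σ (c • v)) := by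
            refine Finset.sum_congr rfl fun σ _ => ?_
            rw [hfsmulL, _root_.map_smul, smul_eq_mul, mul_comm]
        _ = 0 := h0
    have li : LinearIndependent L (fun σ : L ≃ₐ[k] L => (σ : L → L)) :=
      LinearIndependent.comp (ι' := L ≃ₐ[k] L)
        (linearIndependent_monoidHom L L) (fun σ => σ)
        (fun x y h => by ext a; exact DFunLike.ext_iff.1 h a)
    have hzero : ∀ (v : Fin n → L) (σ : L ≃ₐ[k] L), lam (f σ v) = 0 := by
      intro v σ
      refine Fintype.linearIndependent_iff.1 li (fun σ => lam (f σ v)) ?_ σ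
      funext c
      have := hvanish v c
      simpa [Finset.sum_apply, Pi.smul_apply, smul_eq_mul] using this
    apply hlam0
    apply LinearMap.ext
    intro w
    have h1 : f 1 (M 1 *ᵥ w) = w := by
      simp only [hfdef]
      have h2 : (fun i => (1 : L ≃ₐ[k] L) ((M 1 *ᵥ w) i)) = M 1 *ᵥ w := by
        funext i; simp
      rw [h2, Matrix.mulVec_mulVec, hNM, Matrix.one_mulVec]
    have := hzero (M 1 *ᵥ w) 1
    rw [h1] at this
    simpa using this
  -- extract an L-basis of Lⁿ inside V
  obtain ⟨b, hbV, hbsp, hbli⟩ := exists_linearIndependent L ((V : Set (Fin n → L)))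
  have hspanb : Submodule.span L b = ⊤ := by rw [hbsp, hspan]
  let bB : Module.Basis b L (Fin n → L) := Module.Basis.mk hbli (by rw [Subtype.range_coe]; exact hspanb.ge)
  haveI : Fintype b := FiniteDimensional.fintypeBasisIndex bB
  have hcard : Fintype.card b = n := by
    have h1 : Module.finrank L (Fin n → L) = Fintype.card b := Module.finrank_eq_card_basis bB
    simpa using h1.symm
  let e := Fintype.equivFinOfCardEq hcard
  let c : Module.Basis (Fin n) L (Fin n → L) := bB.reindex e
  have hcV : ∀ i, c i ∈ V := by
    intro i
    show bB.reindex e i ∈ V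
    rw [Module.Basis.reindex_apply, Module.Basis.mk_apply]
    exact hbV (e.symm i).2
  -- coordinates of elements of V lie in k
  have hrepr : ∀ w ∈ V, ∀ i, ∃ r : k, algebraMap k L r = c.repr w i := by
    intro w hw i
    apply aux_fixed
    intro σ
    have hsum : ∑ j, c.repr w j • c j = w := c.sum_repr w
    have h2 : ∑ j, σ (c.repr w j) • c j = w := by
      calc ∑ j, σ (c.repr w j) • c j
          = ∑ j, f σ ((c.repr w j) • c j) := by
            refine Finset.sum_congr rfl fun j _ => ?_
            rw [hfsmulL, (hmemV (c j)).1 (hcV j) σ]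
        _ = f σ (∑ j, c.repr w j • c j) := (map_sum (F σ) _ _).symm
        _ = w := by rw [hsum]; exact (hmemV w).1 hw σ
    have h3 : ⇑(c.repr w) = fun j => σ (c.repr w j) := by
      conv_lhs => rw [← h2]
      exact c.repr_sum_self _
    exact (congrFun h3 i).symm
  -- build a k-basis of V of size n
  let cV : Fin n → V := fun i => ⟨c i, hcV i⟩
  have hlik : LinearIndependent k (⇑c) :=
    c.linearIndependent.restrict_scalars
      (fun r s h => (algebraMap k L).injective
        (by simpa [Algebra.algebraMap_eq_smul_one] using h))
  have hlicV : LinearIndependent k cV := by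
    apply LinearIndependent.of_comp V.subtype
    have : (⇑V.subtype ∘ cV) = ⇑c := by funext i; rfl
    rwa [this]
  have hspV : ⊤ ≤ Submodule.span k (Set.range cV) := by
    rintro ⟨w, hw⟩ -
    choose r hr using hrepr w hw
    have hw2 : (⟨w, hw⟩ : V) = ∑ j, r j • cV j := by
      apply Subtype.ext
      have hval : ((∑ j, r j • cV j : V) : Fin n → L) = ∑ j, r j • (c j) := by
        simp [cV]
      rw [hval]
      calc w = ∑ j, c.repr w j • c j := (c.sum_repr w).symm
        _ = ∑ j, r j • c j := by
            refine Finset.sum_congr rfl fun j _ => ?_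
            rw [← hr j, algebraMap_smul]
    rw [hw2]
    exact Submodule.sum_mem _ fun j _ =>
      Submodule.smul_mem _ _ (Submodule.subset_span ⟨j, rfl⟩)
  let basisV : Module.Basis (Fin n) k V := Module.Basis.mk hlicV hspV
  rw [Module.finrank_eq_card_basis basisV, Fintype.card_fin]
end

section
/- Let p be a prime, r ≥ 1, q = p^r, let k be a number field with a fixed algebraic closure, let ζ be a primitive q-th root of unity, and set K = k(ζ). Assume [K : k] = p^{r-1}(p-1). Let L be a finite Galois extension of k containing K such that: Gal(L/K) is cyclic of order q; [L : k] = q · p^{r-1}(p-1); for every τ ∈ Gal(L/k) and every σ ∈ Gal(L/K) one has τ ∘ σ ∘ τ⁻¹ = σ^b, where b is an integer with τ(ζ) = ζ^b; and Gal(L/K) admits a complement in Gal(L/k) (a subgroup H with H ∩ Gal(L/K) = {1} and |H| = p^{r-1}(p-1)). Then there exist an algebraic integer m in the ring of integers O_k of k which is not a p-th power in k, and an element α ∈ L with α^q = m, such that L = K(α). -/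
open NumberField IntermediateField Module

private lemma fix_pow_aux {F L : Type*} [Field F] [Field L] [Algebra F L]
    (g : L ≃ₐ[F] L) (u : L) (hu : g u = u) : ∀ t : ℕ, (g ^ t) u = u := by
  intro t
  induction t with
  | zero => rfl
  | succ n ih => rw [pow_succ, AlgEquiv.mul_apply, hu, ih]

private lemma eigen_pow_aux {F L : Type*} [Field F] [Field L] [Algebra F L]
    (g : L ≃ₐ[F] L) (u x : L) (hu : g u = u) (hx : g x = u * x) :
    ∀ t : ℕ, (g ^ t) x = u ^ t * x := by
  intro t
  induction t with
  | zero => simp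
  | succ n ih =>
    rw [pow_succ, AlgEquiv.mul_apply, hx, map_mul, fix_pow_aux g u hu n, ih, pow_succ]
    ring

/-- If `L/k` is finite Galois containing `K = k(ζ_q)` (of full degree
`p^{r-1}(p-1)` over the number field `k`), with `Gal(L/K)` cyclic of order `q`,
`[L:k] = q·p^{r-1}(p-1)`, conjugation by any `τ ∈ Gal(L/k)` acting on `Gal(L/K)` as
`σ ↦ σ^b` where `τ(ζ) = ζ^b`, and `Gal(L/K)` admitting a complement in `Gal(L/k)`,
then `L = K(α)` for some `α` with `α^q = m`, where `m ∈ O_k` is an algebraic integer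
that is not a `p`-th power in `k`. -/
theorem splitting_field_is_radical
    (p : ℕ) (hp : p.Prime) (r : ℕ) (hr : 1 ≤ r) (q : ℕ) (hq : q = p ^ r)
    (k K L : Type*) [Field k] [NumberField k] [Field K] [Field L]
    [Algebra k K] [Algebra K L] [Algebra k L] [IsScalarTower k K L]
    [IsGalois k L] [FiniteDimensional k L]
    (ζ : K) (hζ : IsPrimitiveRoot ζ q)
    (hKgen : IntermediateField.adjoin k {ζ} = (⊤ : IntermediateField k K))
    (hKdeg : finrank k K = p ^ (r - 1) * (p - 1))
    (N : Subgroup (L ≃ₐ[k] L))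
    (hN : N = IntermediateField.fixingSubgroup ((IsScalarTower.toAlgHom k K L).fieldRange))
    (hNcyc : IsCyclic N) (hNcard : Nat.card N = q)
    (hLdeg : finrank k L = q * (p ^ (r - 1) * (p - 1)))
    (hconj : ∀ τ : L ≃ₐ[k] L, ∀ σ ∈ N, ∀ b : ℤ,
      τ (algebraMap K L ζ) = (algebraMap K L ζ) ^ b → τ * σ * τ⁻¹ = σ ^ b)
    (hcompl : ∃ H : Subgroup (L ≃ₐ[k] L),
      H ⊓ N = ⊥ ∧ Nat.card H = p ^ (r - 1) * (p - 1)) :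
    ∃ (m : 𝓞 k) (α : L),
      (¬ ∃ c : k, (algebraMap (𝓞 k) k m) = c ^ p) ∧
      α ^ q = algebraMap k L (algebraMap (𝓞 k) k m) ∧
      IntermediateField.adjoin K {α} = (⊤ : IntermediateField K L) := by
  classical
  have hp2 : 2 ≤ p := hp.two_le
  have hq0 : 0 < q := by rw [hq]; positivity
  have hq2 : 2 ≤ q := by
    rw [hq]
    calc 2 ≤ p := hp2
    _ = p ^ 1 := (pow_one p).symm
    _ ≤ p ^ r := Nat.pow_le_pow_right (by omega) hr
  haveI : NeZero q := ⟨by omega⟩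
  have hd0 : 0 < p ^ (r - 1) * (p - 1) := Nat.mul_pos (pow_pos (by omega) _) (by omega)
  -- basic instances
  haveI : FiniteDimensional K L := FiniteDimensional.right k K L
  haveI : IsGalois K L := IsGalois.tower_top_of_isGalois k K L
  -- finrank K L = q
  have hKL : finrank K L = q := by
    have h1 : finrank k K * finrank K L = finrank k L := finrank_mul_finrank k K L
    rw [hKdeg, hLdeg] at h1
    have := Nat.eq_of_mul_eq_mul_left hd0 (by linarith [h1] : p ^ (r - 1) * (p - 1) * finrank K L = p ^ (r - 1) * (p - 1) * q)
    exact this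
  -- membership in N
  have hmemN : ∀ g : L ≃ₐ[k] L, g ∈ N ↔ ∀ x : K, g (algebraMap K L x) = algebraMap K L x := by
    intro g
    rw [hN]
    constructor
    · intro hg x
      exact hg ⟨algebraMap K L x, ⟨x, rfl⟩⟩
    · rintro h ⟨y, ⟨x, rfl⟩⟩
      exact h x
  -- IsCyclic (L ≃ₐ[K] L) via surjection from N
  haveI := hNcyc
  have hNtoK : ∀ σ : L ≃ₐ[k] L, σ ∈ N → ∀ x : K, σ (algebraMap K L x) = algebraMap K L x :=
    fun σ hσ => (hmemN σ).mp hσ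
  let ρ : (L ≃ₐ[K] L) →* (L ≃ₐ[k] L) :=
    MonoidHom.mk' (fun σ => AlgEquiv.restrictScalars k σ) (fun a b => rfl)
  have hρinj : Function.Injective ρ := AlgEquiv.restrictScalars_injective k
  have hρapp : ∀ (σ : L ≃ₐ[K] L) (x : L), ρ σ x = σ x := fun _ _ => rfl
  have hρmem : ∀ σ : L ≃ₐ[K] L, ρ σ ∈ N := by
    intro σ
    rw [hmemN]
    intro x
    exact σ.commutes x
  let ρ' : (L ≃ₐ[K] L) →* N := (ρ.codRestrict N hρmem)
  have hρ'inj : Function.Injective ρ' := by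
    intro a b hab
    apply hρinj
    exact congrArg Subtype.val hab
  have hρ'surj : Function.Surjective ρ' := by
    have hcards : Nat.card (L ≃ₐ[K] L) = Nat.card N := by
      rw [hNcard, IsGalois.card_aut_eq_finrank, hKL]
    exact ((Nat.bijective_iff_injective_and_card ρ').mpr ⟨hρ'inj, hcards⟩).surjective
  let ρe : (L ≃ₐ[K] L) ≃* N := MulEquiv.ofBijective ρ' ⟨hρ'inj, hρ'surj⟩
  haveI : IsCyclic (L ≃ₐ[K] L) := isCyclic_of_surjective ρe.symm.toMonoidHom ρe.symm.surjective
  -- Kummer generator over K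
  have hKprim : (primitiveRoots (finrank K L) K).Nonempty := by
    refine ⟨ζ, ?_⟩
    rw [mem_primitiveRoots (by rw [hKL]; omega), hKL]
    exact hζ
  obtain ⟨α₀, hα₀m, hα₀top⟩ := exists_root_adjoin_eq_top_of_isCyclic K L hKprim
  rw [hKL] at hα₀m
  obtain ⟨a, ha⟩ := hα₀m
  -- ha : algebraMap K L a = α₀ ^ q
  have hα₀ne : α₀ ≠ 0 := by
    rintro rfl
    rw [IntermediateField.adjoin_zero] at hα₀top
    have h1 : finrank K (⊥ : IntermediateField K L) = 1 := IntermediateField.finrank_bot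
    rw [hα₀top, IntermediateField.finrank_top', hKL] at h1
    omega
  -- the primitive root in L
  set ζ'' : L := algebraMap K L ζ with hζ''def
  have hζ'' : IsPrimitiveRoot ζ'' q := hζ.map_of_injective (algebraMap K L).injective
  -- generator of Gal(L/K)
  obtain ⟨σ, hσgen⟩ := IsCyclic.exists_generator (α := L ≃ₐ[K] L)
  have hcardK : Fintype.card (L ≃ₐ[K] L) = q := by
    rw [← Nat.card_eq_fintype_card, IsGalois.card_aut_eq_finrank, hKL]
  have hσord : orderOf σ = q := by
    rw [orderOf_eq_card_of_forall_mem_zpowers hσgen, Nat.card_eq_fintype_card, hcardK]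
  -- σ acts on α₀ by a root of unity η
  have hσα₀root : (σ α₀ / α₀) ^ q = 1 := by
    rw [div_pow, ← map_pow, ← ha, AlgEquiv.commutes, ha, div_self (pow_ne_zero q hα₀ne)]
  obtain ⟨j, hjq, hj⟩ := hζ''.eq_pow_of_pow_eq_one hσα₀root
  set η : L := ζ'' ^ j with hηdef
  -- now hj : η = σ α₀ / α₀
  have hση : σ α₀ = η * α₀ := by
    rw [hj, div_mul_cancel₀ _ hα₀ne]
  have hσζ : σ ζ'' = ζ'' := AlgEquiv.commutes σ ζ
  have hση' : σ η = η := by rw [hηdef, map_pow, hσζ]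
  have hσpowα₀ : ∀ t : ℕ, (σ ^ t) α₀ = η ^ t * α₀ := eigen_pow_aux σ η α₀ hση' hση
  -- η is a primitive q-th root of unity
  have hfixone : ∀ t : ℕ, η ^ t = 1 → σ ^ t = 1 := by
    intro t ht
    have h1 : (σ ^ t) α₀ = α₀ := by rw [hσpowα₀ t, ht, one_mul]
    have hadj : Algebra.adjoin K {α₀} = ⊤ := by
      have := IntermediateField.adjoin_simple_toSubalgebra_of_isAlgebraic (IsIntegral.of_finite K α₀).isAlgebraic
      rw [hα₀top, IntermediateField.top_toSubalgebra] at this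
      exact this.symm
    have heq : (σ ^ t : L ≃ₐ[K] L).toAlgHom = (AlgHom.id K L) := by
      apply AlgHom.ext_of_adjoin_eq_top hadj
      intro x hx
      rw [Set.mem_singleton_iff] at hx
      subst hx
      exact h1
    exact AlgEquiv.ext fun x => DFunLike.congr_fun heq x
  have hηprim : IsPrimitiveRoot η q := by
    constructor
    · rw [hηdef, ← pow_mul, mul_comm, pow_mul, hζ''.pow_eq_one, one_pow]
    · intro l hl
      rw [← hσord]
      exact orderOf_dvd_of_pow_eq_one (hfixone l hl)
  -- σ₁ : the same automorphism, viewed over k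
  set σ₁ : L ≃ₐ[k] L := AlgEquiv.restrictScalars k σ with hσ₁def
  have hσ₁mem : σ₁ ∈ N := hρmem σ
  have hσ₁ord : orderOf σ₁ = q := by
    rw [show σ₁ = ρ σ from rfl, orderOf_injective ρ hρinj σ, hσord]
  have hσ₁α₀ : σ₁ α₀ = η * α₀ := hση
  have hσ₁η : σ₁ η = η := hση'
  -- N is generated by σ₁
  set σN : N := ⟨σ₁, hσ₁mem⟩ with hσNdef
  have hσNord : orderOf σN = q := by
    rw [← hσ₁ord]
    exact (orderOf_injective N.subtype N.subtype_injective σN).symm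
  have hNgen : ∀ n : N, ∃ t : ℕ, σ₁ ^ t = (n : L ≃ₐ[k] L) := by
    have htop : Subgroup.zpowers σN = ⊤ := by
      apply Subgroup.eq_top_of_card_eq
      rw [Nat.card_zpowers, hσNord, hNcard]
    intro n
    obtain ⟨t, ht⟩ := (Submonoid.mem_powers_iff _ _).mp
      (mem_powers_iff_mem_zpowers.mpr (htop ▸ Subgroup.mem_top n))
    refine ⟨t, ?_⟩
    rw [← ht]
    rfl
  -- transport of the eigenvector property along any automorphism
  have hker : ∀ (τ : L ≃ₐ[k] L) (x : L), σ₁ x = η * x → σ₁ (τ x) = η * (τ x) := by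
    intro τ x hx
    have hττ : ∀ y : L, τ (τ⁻¹ y) = y := fun y => by
      rw [← AlgEquiv.mul_apply, mul_inv_cancel, AlgEquiv.one_apply]
    have hτζ : (τ⁻¹ ζ'') ^ q = 1 := by rw [← map_pow, hζ''.pow_eq_one, map_one]
    obtain ⟨b, hbq, hb⟩ := hζ''.eq_pow_of_pow_eq_one hτζ
    have hconj' : τ⁻¹ * σ₁ * τ = σ₁ ^ b := by
      have h2 := hconj τ⁻¹ σ₁ hσ₁mem (b : ℤ) (by rw [zpow_natCast, hb])
      rw [inv_inv] at h2
      rw [h2, zpow_natCast]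
    have hx' : ∀ t : ℕ, (σ₁ ^ t) x = η ^ t * x := eigen_pow_aux σ₁ η x hσ₁η hx
    have h4 : τ⁻¹ (σ₁ (τ x)) = η ^ b * x := by
      rw [← hx' b, ← hconj']
      rfl
    have h5 : σ₁ (τ x) = τ (η ^ b * x) := by rw [← h4, hττ]
    have h6 : τ (η ^ b) = η := by
      rw [hηdef, ← pow_mul, mul_comm j b, pow_mul, map_pow, hb, hττ]
    rw [h5, map_mul, h6]
  -- the complement H
  obtain ⟨H, hHN, hHcard⟩ := hcompl
  set E : IntermediateField k L := (IsScalarTower.toAlgHom k K L).fieldRange with hEdef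
  have hσ₁E : ∀ c : E, σ₁ (c : L) = c := by
    rintro ⟨y, ⟨x, rfl⟩⟩
    exact (hmemN σ₁).mp hσ₁mem x
  -- linear independence of characters: choice of a nonvanishing resolvent
  let φ : H → (E →* L) := fun h =>
    ((h : L ≃ₐ[k] L).toAlgHom.toRingHom.comp (E.val.toRingHom)).toMonoidHom
  have hφapp : ∀ (h : H) (c : E), φ h c = (h : L ≃ₐ[k] L) (c : L) := fun _ _ => rfl
  have hφinj : Function.Injective φ := by
    intro h h' hhh
    have hagree : ∀ x : K,
        (((h' : H)⁻¹ * h : H) : L ≃ₐ[k] L) (algebraMap K L x) = algebraMap K L x := by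
      intro x
      have hc : φ h ⟨algebraMap K L x, ⟨x, rfl⟩⟩ = φ h' ⟨algebraMap K L x, ⟨x, rfl⟩⟩ := by rw [hhh]
      rw [hφapp, hφapp] at hc
      show ((h'⁻¹ * h : H) : L ≃ₐ[k] L) (algebraMap K L x) = algebraMap K L x
      rw [Subgroup.coe_mul, AlgEquiv.mul_apply, hc, ← AlgEquiv.mul_apply]
      show ((h'⁻¹ : H) : L ≃ₐ[k] L) (((h' : H) : L ≃ₐ[k] L) (algebraMap K L x)) = _
      rw [← AlgEquiv.mul_apply, ← Subgroup.coe_mul, inv_mul_cancel, Subgroup.coe_one,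
        AlgEquiv.one_apply]
    have hmem2 : ((h'⁻¹ * h : H) : L ≃ₐ[k] L) ∈ H ⊓ N :=
      Subgroup.mem_inf.mpr ⟨(h'⁻¹ * h : H).2, (hmemN _).mpr hagree⟩
    rw [hHN, Subgroup.mem_bot] at hmem2
    have h1 : (h'⁻¹ * h : H) = 1 := by
      exact_mod_cast hmem2
    exact (inv_mul_eq_one.mp h1).symm
  have hexists : ∃ c : E, (∑ h : H, (h : L ≃ₐ[k] L) ((c : L) * α₀)) ≠ 0 := by
    by_contra hcon
    push_neg at hcon
    have hli := (linearIndependent_monoidHom E L).comp φ hφinj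
    rw [Fintype.linearIndependent_iff] at hli
    have h0 := hli (fun h => (h : L ≃ₐ[k] L) α₀) ?_
    · have h1 := h0 1
      simp only [OneMemClass.coe_one, AlgEquiv.one_apply] at h1
      exact hα₀ne h1
    · funext c
      have h2 := hcon c
      simp only [map_mul] at h2
      simp only [Finset.sum_apply, Pi.smul_apply, Function.comp_apply, smul_eq_mul,
        Pi.zero_apply]
      rw [← h2]
      exact Finset.sum_congr rfl fun h _ => by rw [hφapp]; ring
  obtain ⟨c, hcne⟩ := hexists
  set β : L := (c : L) * α₀ with hβdef
  set α : L := ∑ h : H, (h : L ≃ₐ[k] L) β with hαdef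
  have hαne : α ≠ 0 := hcne
  have hσ₁β : σ₁ β = η * β := by
    rw [hβdef, map_mul, hσ₁E c, hσ₁α₀]
    ring
  have hσ₁α : σ₁ α = η * α := by
    rw [hαdef, map_sum, Finset.mul_sum]
    exact Finset.sum_congr rfl fun h _ => hker (h : L ≃ₐ[k] L) β hσ₁β
  have hHα : ∀ h' : H, (h' : L ≃ₐ[k] L) α = α := by
    intro h'
    rw [hαdef, map_sum]
    exact Fintype.sum_bijective (fun h => h' * h) (Group.mulLeft_bijective h') _ _
      (fun h => by rw [Subgroup.coe_mul, AlgEquiv.mul_apply])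
  have hNfix : ∀ n : N, (n : L ≃ₐ[k] L) (α ^ q) = α ^ q := by
    intro n
    obtain ⟨t, ht⟩ := hNgen n
    rw [← ht, map_pow, eigen_pow_aux σ₁ η α hσ₁η hσ₁α t, mul_pow, ← pow_mul, mul_comm t q,
      pow_mul, hηprim.pow_eq_one, one_pow, one_mul]
  have hGfix : ∀ g : L ≃ₐ[k] L, g (α ^ q) = α ^ q := by
    have hinj2 : Function.Injective
        (fun x : N × H => (x.1 : L ≃ₐ[k] L) * (x.2 : L ≃ₐ[k] L)) := by
      rintro ⟨n, h⟩ ⟨n', h'⟩ hx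
      dsimp only at hx
      have e1 : ((n' : L ≃ₐ[k] L))⁻¹ * ↑n = (h' : L ≃ₐ[k] L) * (↑h)⁻¹ :=
        mul_right_cancel (b := (h : L ≃ₐ[k] L))
          (by rw [mul_assoc, hx, inv_mul_cancel_left, inv_mul_cancel_right])
      have hmem3 : ((h' : L ≃ₐ[k] L) * (↑h)⁻¹) ∈ H ⊓ N :=
        Subgroup.mem_inf.mpr ⟨mul_mem h'.2 (inv_mem h.2),
          by rw [← e1]; exact mul_mem (inv_mem n'.2) n.2⟩
      rw [hHN, Subgroup.mem_bot] at hmem3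
      have hh : (h : L ≃ₐ[k] L) = h' := (mul_inv_eq_one.mp hmem3).symm
      have hn : (n : L ≃ₐ[k] L) = n' := by
        rw [hmem3] at e1
        exact (inv_mul_eq_one.mp e1).symm
      exact Prod.ext (Subtype.ext hn) (Subtype.ext hh)
    have hcards2 : Nat.card (N × H) = Nat.card (L ≃ₐ[k] L) := by
      rw [Nat.card_prod, hNcard, hHcard,
        IsGalois.card_aut_eq_finrank, hLdeg]
    have hsurj2 := ((Nat.bijective_iff_injective_and_card _).mpr ⟨hinj2, hcards2⟩).surjective
    intro g
    obtain ⟨⟨n, h⟩, hg⟩ := hsurj2 g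
    rw [← hg]
    dsimp only
    rw [AlgEquiv.mul_apply, map_pow, hHα h, hNfix n]
  -- α ^ q lies in k
  have hbot : α ^ q ∈ (⊥ : IntermediateField k L) := by
    rw [← IsGalois.fixedField_fixingSubgroup (⊥ : IntermediateField k L)]
    exact fun g => hGfix g
  obtain ⟨m', hm'⟩ := IntermediateField.mem_bot.mp hbot
  -- hm' : algebraMap k L m' = α ^ q
  obtain ⟨⟨num, den⟩, hnd⟩ := IsLocalization.surj (nonZeroDivisors (𝓞 k)) m'
  -- hnd : m' * algebraMap (𝓞 k) k den = algebraMap (𝓞 k) k num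
  set sl : k := algebraMap (𝓞 k) k (den : 𝓞 k) with hsldef
  have hden0 : sl ≠ 0 := by
    intro h0
    have hd : (den : 𝓞 k) ≠ 0 := nonZeroDivisors.ne_zero den.2
    exact hd (IsFractionRing.injective (𝓞 k) k (by rw [← hsldef, h0, map_zero]))
  set sL : L := algebraMap k L sl with hsLdef
  have hsLne : sL ≠ 0 := fun h0 => hden0 ((algebraMap k L).injective (by rw [← hsLdef, h0, map_zero]))
  set αf : L := sL * α with hαfdef
  have hαfne : αf ≠ 0 := mul_ne_zero hsLne hαne
  set m : 𝓞 k := (den : 𝓞 k) ^ (q - 1) * num with hmdef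
  have hαfq : αf ^ q = algebraMap k L (algebraMap (𝓞 k) k m) := by
    have e2 : sl ^ q * m' = algebraMap (𝓞 k) k m := by
      have hq' : q - 1 + 1 = q := by omega
      have e1' : sl ^ q * m' = sl ^ (q - 1) * (m' * sl) := by
        conv_lhs => rw [← hq']
        rw [pow_succ]
        ring
      rw [e1', hnd, hmdef, map_mul, map_pow]
    rw [hαfdef, mul_pow, hsLdef, ← map_pow, ← hm', ← map_mul, e2]
  have hσ₁αf : σ₁ αf = η * αf := by
    rw [hαfdef, map_mul, hsLdef, AlgEquiv.commutes, hσ₁α]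
    ring
  refine ⟨m, αf, ?_, hαfq, ?_⟩
  · -- m is not a p-th power in k
    rintro ⟨c0, hc0⟩
    have hcq : αf ^ q = (algebraMap k L c0) ^ p := by rw [hαfq, hc0, map_pow]
    have hc0ne : algebraMap k L c0 ≠ 0 := by
      intro h0
      rw [h0, zero_pow hp.pos.ne'] at hcq
      exact (pow_ne_zero q hαfne) hcq
    haveI : NeZero p := ⟨hp.pos.ne'⟩
    set t1 : ℕ := p ^ (r - 1) with ht1def
    have hqt : t1 * p = q := by rw [hq, ht1def, ← pow_succ]; congr 1; omega
    have hε : IsPrimitiveRoot (η ^ t1) p := hηprim.pow hq0 hqt.symm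
    set ω : L := αf ^ t1 / algebraMap k L c0 with hωdef
    have hωp : ω ^ p = 1 := by
      rw [hωdef, div_pow, ← pow_mul, hqt, hcq, div_self (pow_ne_zero p hc0ne)]
    obtain ⟨i, hip, hi⟩ := hε.eq_pow_of_pow_eq_one hωp
    -- hi : (η ^ t1) ^ i = ω
    have hσ₁ω : σ₁ ω = η ^ t1 * ω := by
      rw [hωdef, map_div₀, map_pow, hσ₁αf, AlgEquiv.commutes, mul_pow, mul_div_assoc]
    have hσ₁ω' : σ₁ ω = ω := by
      rw [← hi, map_pow, map_pow, hσ₁η]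
    have hωne : ω ≠ 0 := by
      intro h0
      rw [h0, zero_pow hp.pos.ne'] at hωp
      exact zero_ne_one hωp
    have hη1 : η ^ t1 = 1 := by
      have h7 : η ^ t1 * ω = 1 * ω := by rw [one_mul, ← hσ₁ω, hσ₁ω']
      exact mul_right_cancel₀ hωne h7
    exact hε.ne_one hp.one_lt hη1
  · -- adjoin K {αf} = ⊤
    have hσαf : σ αf = η * αf := hσ₁αf
    have hint : IsIntegral K αf := IsIntegral.of_finite K αf
    have hP0 : minpoly K αf ≠ 0 := minpoly.ne_zero hint
    have hroots : ∀ t : ℕ, (Polynomial.aeval (η ^ t * αf)) (minpoly K αf) = 0 := by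
      intro t
      have e3 := Polynomial.aeval_algHom_apply (σ ^ t : L ≃ₐ[K] L).toAlgHom αf (minpoly K αf)
      rw [minpoly.aeval, map_zero] at e3
      have e4 : (σ ^ t : L ≃ₐ[K] L).toAlgHom αf = η ^ t * αf :=
        eigen_pow_aux σ η αf hση' hσαf t
      rw [e4] at e3
      exact e3
    set P : Polynomial L := (minpoly K αf).map (algebraMap K L) with hPdef
    have hPm0 : P ≠ 0 := by
      rw [hPdef, Polynomial.map_ne_zero_iff (algebraMap K L).injective]
      exact hP0
    have hmemroots : ∀ t : ℕ, (η ^ t * αf) ∈ P.roots := by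
      intro t
      rw [Polynomial.mem_roots']
      refine ⟨hPm0, ?_⟩
      rw [Polynomial.IsRoot, hPdef, Polynomial.eval_map, ← Polynomial.aeval_def]
      exact hroots t
    have hinj3 : Set.InjOn (fun t => η ^ t * αf) (Finset.range q) := by
      intro t ht t' ht' hee
      dsimp only at hee
      have h8 := mul_right_cancel₀ hαfne hee
      exact hηprim.pow_inj (Finset.mem_range.mp (Finset.mem_coe.mp ht))
        (Finset.mem_range.mp (Finset.mem_coe.mp ht')) h8
    have hScard : ((Finset.range q).image (fun t => η ^ t * αf)).card = q := by
      rw [Finset.card_image_of_injOn hinj3, Finset.card_range]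
    have hsub : ((Finset.range q).image (fun t => η ^ t * αf)) ⊆ P.roots.toFinset := by
      intro x hx
      rw [Finset.mem_image] at hx
      obtain ⟨t, _, rfl⟩ := hx
      rw [Multiset.mem_toFinset]
      exact hmemroots t
    have hqle : q ≤ (minpoly K αf).natDegree := by
      calc q = ((Finset.range q).image (fun t => η ^ t * αf)).card := hScard.symm
        _ ≤ P.roots.toFinset.card := Finset.card_le_card hsub
        _ ≤ Multiset.card P.roots := Multiset.toFinset_card_le _
        _ ≤ P.natDegree := Polynomial.card_roots' P
        _ = (minpoly K αf).natDegree := by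
            rw [hPdef]
            exact Polynomial.natDegree_map_eq_of_injective (algebraMap K L).injective _
    apply IntermediateField.eq_of_le_of_finrank_le le_top
    rw [IntermediateField.finrank_top', hKL, IntermediateField.adjoin.finrank hint]
    exact hqle
end

section
/- Let q ≥ 1, let L be a field containing a primitive q-th root of unity ζ, and let σ be a field automorphism of L with σ(ζ) = ζ and σ^q = id. Let τ be a field automorphism of L and b an integer coprime to q such that τ(ζ) = ζ^b and τ ∘ σ ∘ τ⁻¹ = σ^b. Let α ∈ L satisfy τ(α) = α. Then for every integer i, the Lagrange resolvent u_i = Σ_{j=0}^{q-1} ζ^{i·j} · σ^{-j}(α) satisfies τ(u_i) = u_i. -/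
/-- If `τ(ζ) = ζ^b` with `gcd(b, q) = 1`, `τστ⁻¹ = σ^b` and `τ(α) = α`,
then every Lagrange resolvent `u_i = Σ_{j=0}^{q-1} ζ^{ij} σ^{-j}(α)` is fixed by `τ`. -/
theorem lagrange_resolvent_fixed_by_tau
    (q : ℕ) (hq : 1 ≤ q) (L : Type*) [Field L]
    (ζ : L) (hζ : IsPrimitiveRoot ζ q)
    (σ : L ≃+* L) (hσζ : σ ζ = ζ) (hσq : σ ^ q = 1)
    (τ : L ≃+* L) (b : ℤ) (hb : Int.gcd b q = 1)
    (hτζ : τ ζ = ζ ^ b) (hτσ : τ * σ * τ⁻¹ = σ ^ b)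
    (α : L) (hτα : τ α = α) (i : ℤ) :
    τ (∑ j ∈ Finset.range q, ζ ^ (i * (j : ℤ)) * ((σ⁻¹) ^ j) α) =
      ∑ j ∈ Finset.range q, ζ ^ (i * (j : ℤ)) * ((σ⁻¹) ^ j) α := by
  haveI : NeZero q := ⟨by omega⟩
  have hζ0 : ζ ≠ 0 := hζ.ne_zero (by omega)
  have hζq : ζ ^ (q : ℤ) = 1 := by rw [zpow_natCast, hζ.pow_eq_one]
  have hσqz : σ ^ (q : ℤ) = 1 := by rw [zpow_natCast, hσq]
  set F : ℤ → L := fun m => ζ ^ (i * m) * (σ ^ (-m)) α with hFdef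
  -- F only depends on the residue mod q
  have hFcong : ∀ m n : ℤ, (m : ZMod q) = (n : ZMod q) → F m = F n := by
    intro m n h
    rw [ZMod.intCast_eq_intCast_iff] at h
    obtain ⟨k, hk⟩ : (q : ℤ) ∣ m - n := Int.ModEq.dvd h.symm
    have hm : m = n + q * k := by linarith
    simp only [hFdef]
    rw [hm]
    congr 1
    · have h1 : i * (n + q * k) = i * n + (q : ℤ) * (i * k) := by ring
      rw [h1, zpow_add₀ hζ0, zpow_mul ζ (q : ℤ) (i * k), hζq, one_zpow, mul_one]
    · have h2 : -(n + (q : ℤ) * k) = -n + (q : ℤ) * (-k) := by ring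
      rw [h2, zpow_add, zpow_mul σ (q : ℤ) (-k), hσqz, one_zpow, mul_one]
  -- each term of the sum maps under τ to F (b * j)
  have hτterm : ∀ j : ℕ, τ (ζ ^ (i * (j : ℤ)) * ((σ⁻¹) ^ j) α) = F (b * j) := by
    intro j
    have h1 : τ * σ⁻¹ = σ ^ (-b) * τ := by rw [zpow_neg, ← hτσ]; group
    have h2 : SemiconjBy τ σ⁻¹ (σ ^ (-b)) := h1
    have h3 := (h2.pow_right j).eq
    have h4 : τ (((σ⁻¹) ^ j) α) = ((σ ^ (-b)) ^ j) α := by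
      calc τ (((σ⁻¹) ^ j) α) = (τ * (σ⁻¹) ^ j) α := rfl
        _ = ((σ ^ (-b)) ^ j * τ) α := by rw [h3]
        _ = ((σ ^ (-b)) ^ j) (τ α) := rfl
        _ = ((σ ^ (-b)) ^ j) α := by rw [hτα]
    rw [map_mul, map_zpow₀, hτζ, h4, hFdef]
    congr 1
    · rw [← zpow_mul]
      congr 1
      ring
    · rw [← zpow_natCast (σ ^ (-b)) j, ← zpow_mul]
      congr 1
      ring
  -- each term of the sum equals F j
  have hterm : ∀ j : ℕ, ζ ^ (i * (j : ℤ)) * ((σ⁻¹) ^ j) α = F j := by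
    intro j
    simp only [hFdef]
    congr 2
    rw [← zpow_natCast σ⁻¹ j, inv_zpow, ← zpow_neg]
  -- pass sums over range q to sums over ZMod q
  set G : ZMod q → L := fun x => F x.val with hGdef
  have key1 : ∀ m : ℤ, F m = G (m : ZMod q) := by
    intro m
    apply hFcong
    simp [ZMod.natCast_val, ZMod.intCast_cast, ZMod.intCast_zmod_cast]
  have hsum : ∀ f : ZMod q → L, ∑ j ∈ Finset.range q, f (j : ZMod q) = ∑ x : ZMod q, f x := by
    intro f
    apply Finset.sum_nbij' (i := fun j : ℕ => (j : ZMod q)) (j := fun x : ZMod q => x.val)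
    · intro a _; exact Finset.mem_univ _
    · intro x _; exact Finset.mem_range.mpr (ZMod.val_lt x)
    · intro a ha; exact ZMod.val_cast_of_lt (Finset.mem_range.mp ha)
    · intro x _; exact ZMod.natCast_rightInverse x
    · intro a _; rfl
  -- b is a unit mod q
  obtain ⟨u, v, huv⟩ : IsCoprime b (q : ℤ) := Int.isCoprime_iff_gcd_eq_one.mpr hb
  have hbu : IsUnit ((b : ℤ) : ZMod q) := by
    refine IsUnit.of_mul_eq_one ((u : ℤ) : ZMod q) ?_
    have := congrArg (Int.cast : ℤ → ZMod q) huv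
    push_cast at this
    rw [ZMod.natCast_self] at this
    linear_combination this
  obtain ⟨w, hw⟩ := hbu
  calc τ (∑ j ∈ Finset.range q, ζ ^ (i * (j : ℤ)) * ((σ⁻¹) ^ j) α)
      = ∑ j ∈ Finset.range q, F (b * j) := by rw [map_sum]; exact Finset.sum_congr rfl fun j _ => hτterm j
    _ = ∑ j ∈ Finset.range q, G ((w : ZMod q) * (j : ZMod q)) := by
        refine Finset.sum_congr rfl fun j _ => ?_
        rw [key1 (b * j)]
        congr 1
        push_cast
        rw [hw]
    _ = ∑ x : ZMod q, G ((w : ZMod q) * x) := hsum fun x => G ((w : ZMod q) * x)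
    _ = ∑ x : ZMod q, G x := Equiv.sum_comp (Units.mulLeft w) G
    _ = ∑ j ∈ Finset.range q, G ((j : ZMod q)) := (hsum _).symm
    _ = ∑ j ∈ Finset.range q, ζ ^ (i * (j : ℤ)) * ((σ⁻¹) ^ j) α := by
        refine Finset.sum_congr rfl fun j _ => ?_
        rw [hterm j, key1 j]
        norm_cast
end
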